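/- Let S and A be nonempty finite types, r : S × A → ℝ, and P : S × A → S → ℝ a transition kernel (P(s'|s,a) ≥ 0 for all s' and ∑_{s'∈S} P(s'|s,a) = 1 for every (s,a)). Suppose J ∈ ℝ, V : S → ℝ, Q : S × A → ℝ satisfy the Bellman optimality relations: J + Q(s,a) = r(s,a) + ∑_{s'} P(s'|s,a) · V(s') for all (s,a), and V(s) = max_{a∈A} Q(s,a) for all s. For each natural number k ≥ 1 define V_k(s) := J + V(s)/k and Q_{k+1}(s,a) := r(s,a)/(k+1) + (k/(k+1)) · ∑_{s'} P(s'|s,a) · V_k(s'). Then for all k ≥ 1: (i) Q_{k+1}(s,a) = J + Q(s,a)/(k+1) for all (s,a); (ii) max_{a∈A} Q_{k+1}(s,a) = V_{k+1}(s) for all s; (iii) max_{(s,a)} |Q_{k+1}(s,a)| ≤ |J| + (max_{(s,a)} |Q(s,a)|)/(k+1). -/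
import Mathlib


open Finset

lemma sup'_affine {A : Type*} [Fintype A] [Nonempty A] (f : A → ℝ) (J c : ℝ) (hc : 0 < c) :
    univ.sup' univ_nonempty (fun a => J + f a / c) =
      J + (univ.sup' univ_nonempty f) / c := by
  apply le_antisymm
  · apply Finset.sup'_le
    intro a _
    have := Finset.le_sup' f (Finset.mem_univ a)
    gcongr
  · obtain ⟨a, _, ha⟩ := Finset.exists_mem_eq_sup' (univ_nonempty : (univ : Finset A).Nonempty) f
    rw [ha]
    exact Finset.le_sup' (fun a => J + f a / c) (Finset.mem_univ a)

/-- Properties of the auxiliary sequences `V_k(s) = J + V(s)/k` and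
`Q_{k+1}(s,a) = r(s,a)/(k+1) + (k/(k+1)) ∑_{s'} P(s'|s,a) V_k(s')`. -/
theorem auxiliary_sequence_properties
    {S A : Type*} [Fintype S] [Nonempty S] [Fintype A] [Nonempty A]
    (r : S × A → ℝ) (P : S × A → S → ℝ)
    (hP_nonneg : ∀ sa s', 0 ≤ P sa s')
    (hP_sum : ∀ sa, ∑ s' : S, P sa s' = 1)
    (J : ℝ) (V : S → ℝ) (Q : S × A → ℝ)
    (hbellman : ∀ s a, J + Q (s, a) = r (s, a) + ∑ s' : S, P (s, a) s' * V s')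
    (hmax : ∀ s, V s = univ.sup' univ_nonempty (fun a => Q (s, a)))
    (Vk : ℕ → S → ℝ) (Qk : ℕ → S × A → ℝ)
    (hVk : ∀ k : ℕ, 1 ≤ k → ∀ s, Vk k s = J + V s / (k : ℝ))
    (hQk : ∀ k : ℕ, 1 ≤ k → ∀ s a,
      Qk (k + 1) (s, a) = r (s, a) / ((k : ℝ) + 1) +
        ((k : ℝ) / ((k : ℝ) + 1)) * ∑ s' : S, P (s, a) s' * Vk k s') :
    ∀ k : ℕ, 1 ≤ k →
      (∀ s a, Qk (k + 1) (s, a) = J + Q (s, a) / ((k : ℝ) + 1)) ∧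
      (∀ s, univ.sup' univ_nonempty (fun a => Qk (k + 1) (s, a)) = Vk (k + 1) s) ∧
      (univ.sup' univ_nonempty (fun sa : S × A => |Qk (k + 1) sa|) ≤
        |J| + univ.sup' univ_nonempty (fun sa : S × A => |Q sa|) / ((k : ℝ) + 1)) := by
  intro k hk
  have hk0 : (0 : ℝ) < (k : ℝ) := by exact_mod_cast hk
  have hk1 : (0 : ℝ) < (k : ℝ) + 1 := by linarith
  have part1 : ∀ s a, Qk (k + 1) (s, a) = J + Q (s, a) / ((k : ℝ) + 1) := by
    intro s a
    have hsum : ∑ s' : S, P (s, a) s' * Vk k s'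
        = J + (∑ s' : S, P (s, a) s' * V s') / (k : ℝ) := by
      have : ∀ s' : S, P (s, a) s' * Vk k s'
          = P (s, a) s' * J + (P (s, a) s' * V s') / (k : ℝ) := by
        intro s'
        rw [hVk k hk s']
        ring
      rw [Finset.sum_congr rfl (fun s' _ => this s'), Finset.sum_add_distrib,
        ← Finset.sum_mul, hP_sum, ← Finset.sum_div]
      ring
    have hb := hbellman s a
    have hPV : ∑ s' : S, P (s, a) s' * V s' = J + Q (s, a) - r (s, a) := by linarith
    rw [hQk k hk s a, hsum, hPV]
    field_simp
    ring
  refine ⟨part1, ?_, ?_⟩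
  · intro s
    have : (fun a => Qk (k + 1) (s, a)) = fun a => J + Q (s, a) / ((k : ℝ) + 1) := by
      funext a; exact part1 s a
    rw [this, sup'_affine (fun a => Q (s, a)) J ((k : ℝ) + 1) hk1, ← hmax s,
      hVk (k + 1) (by omega) s]
    push_cast
    ring_nf
  · apply Finset.sup'_le
    rintro ⟨s, a⟩ _
    rw [part1 s a]
    calc |J + Q (s, a) / ((k : ℝ) + 1)| ≤ |J| + |Q (s, a)| / ((k : ℝ) + 1) := by
          calc |J + Q (s, a) / ((k : ℝ) + 1)| ≤ |J| + |Q (s, a) / ((k : ℝ) + 1)| := abs_add_le _ _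
            _ = |J| + |Q (s, a)| / ((k : ℝ) + 1) := by rw [abs_div, abs_of_pos hk1]
      _ ≤ |J| + univ.sup' univ_nonempty (fun sa : S × A => |Q sa|) / ((k : ℝ) + 1) := by
          gcongr
          exact Finset.le_sup' (fun sa : S × A => |Q sa|) (Finset.mem_univ (s, a))
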